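/- Let $\Delta > 0$, $B, M \geq 1$ integers, and let $g : \mathbb{R} \to \{-1, 0, 1\}$ be a $B$-block alternating step function with step size $\Delta$ supported on an interval $I$. If $b : I \to \mathbb{R}$ is a bounded function that is $M$-piecewise monotone on $I$, then $|\int_I b(x) g(x) \, dx| \leq C\, M B \Delta \|b\|_{\infty}$ for an absolute constant $C$. -/

import Mathlib

open MeasureTheory Set intervalIntegral

private lemma chain_mono {α : Type*} [Preorder α] {p : ℕ → α} {N : ℕ}
    (h : ∀ l < N, p l ≤ p (l + 1)) : ∀ j k, j ≤ k → k ≤ N → p j ≤ p k := by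
  intro j k hjk hkN
  induction k with
  | zero => exact le_of_eq (congrArg p (Nat.le_zero.mp hjk))
  | succ n ih =>
    rcases Nat.lt_or_ge j (n + 1) with h1 | h2
    · exact le_trans (ih (Nat.lt_succ_iff.mp h1) (le_trans (Nat.le_succ n) hkN))
        (h n (by omega))
    · exact le_of_eq (congrArg p (le_antisymm hjk h2))

private lemma alt_sum_bounds (c : ℕ → ℝ) :
    ∀ n p, (∀ j, p ≤ j → j + 1 < p + n → c j ≤ c (j + 1)) →
      (Odd n →
        c p ≤ ∑ r ∈ Finset.range n, (-1 : ℝ) ^ r * c (p + r) ∧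
        ∑ r ∈ Finset.range n, (-1 : ℝ) ^ r * c (p + r) ≤ c (p + n - 1)) ∧
      (Even n → n ≠ 0 →
        c p - c (p + n - 1) ≤ ∑ r ∈ Finset.range n, (-1 : ℝ) ^ r * c (p + r) ∧
        ∑ r ∈ Finset.range n, (-1 : ℝ) ^ r * c (p + r) ≤ 0) := by
  intro n
  induction n with
  | zero =>
    intro p _
    constructor
    · intro h; exact absurd h (by simp [Nat.odd_iff])
    · intro _ h; exact absurd rfl h
  | succ n ih =>
    intro p hmono
    have hrec : ∑ r ∈ Finset.range (n + 1), (-1 : ℝ) ^ r * c (p + r)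
        = c p - ∑ r ∈ Finset.range n, (-1 : ℝ) ^ r * c (p + 1 + r) := by
      rw [Finset.sum_range_succ']
      have h1 : ∀ i ∈ Finset.range n, (-1 : ℝ) ^ (i + 1) * c (p + (i + 1))
          = -((-1 : ℝ) ^ i * c (p + 1 + i)) := by
        intro i _
        have e : p + (i + 1) = p + 1 + i := by omega
        rw [e, pow_succ]; ring
      rw [Finset.sum_congr rfl h1, Finset.sum_neg_distrib]
      simp [neg_add_eq_sub]
    rcases Nat.eq_zero_or_pos n with rfl | hn
    · constructor
      · intro _
        simp [hrec]
      · intro he _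
        exact absurd he (by simp [Nat.even_iff])
    · have hc : c p ≤ c (p + 1) := hmono p le_rfl (by omega)
      have hmono' : ∀ j, p + 1 ≤ j → j + 1 < p + 1 + n → c j ≤ c (j + 1) :=
        fun j h1 h2 => hmono j (by omega) (by omega)
      obtain ⟨iodd, ieven⟩ := ih (p + 1) hmono'
      constructor
      · intro hodd
        have hne : Even n := by
          rw [Nat.odd_iff] at hodd; rw [Nat.even_iff]; omega
        obtain ⟨l1, l2⟩ := ieven hne (by omega)
        rw [hrec]
        have e1 : p + 1 + n - 1 = p + n := by omega
        have e2 : p + (n + 1) - 1 = p + n := by omega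
        rw [e1] at l1
        rw [e2]
        exact ⟨by linarith, by linarith⟩
      · intro heven _
        have hno : Odd n := by
          rw [Nat.even_iff] at heven; rw [Nat.odd_iff]; omega
        obtain ⟨l1, l2⟩ := iodd hno
        rw [hrec]
        have e1 : p + 1 + n - 1 = p + n := by omega
        have e2 : p + (n + 1) - 1 = p + n := by omega
        rw [e1] at l2
        rw [e2]
        exact ⟨by linarith, by linarith⟩

private lemma alt_run_abs_mono (c : ℕ → ℝ) (K : ℝ) (hK : 0 ≤ K) (p n : ℕ)
    (hb : ∀ j, p ≤ j → j < p + n → |c j| ≤ K)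
    (hmono : ∀ j, p ≤ j → j + 1 < p + n → c j ≤ c (j + 1)) :
    |∑ r ∈ Finset.range n, (-1 : ℝ) ^ r * c (p + r)| ≤ 2 * K := by
  rcases Nat.eq_zero_or_pos n with rfl | hn
  · simp only [Finset.range_zero, Finset.sum_empty, abs_zero]; linarith
  obtain ⟨hodd, heven⟩ := alt_sum_bounds c n p hmono
  have b1 : |c p| ≤ K := hb p le_rfl (by omega)
  have b2 : |c (p + n - 1)| ≤ K := hb _ (by omega) (by omega)
  rcases Nat.even_or_odd n with he | ho
  · obtain ⟨l1, l2⟩ := heven he (by omega)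
    rw [abs_le] at b1 b2 ⊢
    constructor <;> linarith [b1.1, b1.2, b2.1, b2.2]
  · obtain ⟨l1, l2⟩ := hodd ho
    rw [abs_le] at b1 b2 ⊢
    constructor <;> linarith [b1.1, b1.2, b2.1, b2.2]

private lemma alt_run_abs (c : ℕ → ℝ) (K : ℝ) (hK : 0 ≤ K) (p n : ℕ)
    (hb : ∀ j, p ≤ j → j < p + n → |c j| ≤ K)
    (hmono : (∀ j, p ≤ j → j + 1 < p + n → c j ≤ c (j + 1)) ∨
             (∀ j, p ≤ j → j + 1 < p + n → c (j + 1) ≤ c j)) :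
    |∑ j ∈ Finset.Ico p (p + n), (-1 : ℝ) ^ j * c j| ≤ 2 * K := by
  have hsum : ∑ j ∈ Finset.Ico p (p + n), (-1 : ℝ) ^ j * c j
      = (-1 : ℝ) ^ p * ∑ r ∈ Finset.range n, (-1 : ℝ) ^ r * c (p + r) := by
    rw [Finset.sum_Ico_eq_sum_range, Finset.mul_sum]
    simp only [Nat.add_sub_cancel_left]
    exact Finset.sum_congr rfl fun r _ => by rw [pow_add]; ring
  rw [hsum, abs_mul, abs_pow, abs_neg, abs_one, one_pow, one_mul]
  rcases hmono with h | h
  · exact alt_run_abs_mono c K hK p n hb h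
  · have h2 := alt_run_abs_mono (fun j => -c j) K hK p n
      (fun j h1 h2 => by simpa using hb j h1 h2)
      (fun j h1 h2 => by simpa using h j h1 h2)
    simp only [mul_neg, Finset.sum_neg_distrib, abs_neg] at h2
    exact h2

private lemma alt_partition (c : ℕ → ℝ) (K : ℝ) (hK : 0 ≤ K) :
    ∀ (N : ℕ) (p : ℕ → ℕ),
      (∀ l < N, p l ≤ p (l + 1)) →
      (∀ j < p N, |c j| ≤ K) →
      (∀ l < N, (∀ j, p l ≤ j → j + 1 < p (l + 1) → c j ≤ c (j + 1)) ∨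
        (∀ j, p l ≤ j → j + 1 < p (l + 1) → c (j + 1) ≤ c j)) →
      |∑ j ∈ Finset.Ico (p 0) (p N), (-1 : ℝ) ^ j * c j| ≤ N * (2 * K) := by
  intro N
  induction N with
  | zero => intro p _ _ _; simp
  | succ N ih =>
    intro p hmono hb hrun
    have h0N : p 0 ≤ p N := chain_mono (fun l hl => hmono l (by omega)) 0 N (by omega) le_rfl
    have hNN : p N ≤ p (N + 1) := hmono N (by omega)
    rw [← Finset.sum_Ico_consecutive _ h0N hNN]
    have ihN := ih p (fun l hl => hmono l (by omega))
      (fun j hj => hb j (by omega)) (fun l hl => hrun l (by omega))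
    have hlast : |∑ j ∈ Finset.Ico (p N) (p (N + 1)), (-1 : ℝ) ^ j * c j| ≤ 2 * K := by
      have he : p (N + 1) = p N + (p (N + 1) - p N) := by omega
      rw [he]
      apply alt_run_abs c K hK (p N) (p (N + 1) - p N)
      · intro j h1 h2; exact hb j (by omega)
      · rcases hrun N (by omega) with h | h
        · exact Or.inl fun j h1 h2 => h j h1 (by omega)
        · exact Or.inr fun j h1 h2 => h j h1 (by omega)
    calc |(∑ j ∈ Finset.Ico (p 0) (p N), (-1 : ℝ) ^ j * c j)
          + ∑ j ∈ Finset.Ico (p N) (p (N + 1)), (-1 : ℝ) ^ j * c j|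
        ≤ |∑ j ∈ Finset.Ico (p 0) (p N), (-1 : ℝ) ^ j * c j|
          + |∑ j ∈ Finset.Ico (p N) (p (N + 1)), (-1 : ℝ) ^ j * c j| := abs_add_le _ _
      _ ≤ N * (2 * K) + 2 * K := add_le_add ihN hlast
      _ = (N + 1 : ℕ) * (2 * K) := by push_cast; ring

private lemma step_le_step {b : ℝ → ℝ} {u Δ tk tk1 : ℝ} (hΔ : 0 < Δ)
    (h1 : tk ≤ u) (h2 : u + 2 * Δ ≤ tk1)
    (hmono : MonotoneOn b (Set.Ioo tk tk1))
    (hint1 : IntervalIntegrable b volume u (u + Δ))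
    (hint2 : IntervalIntegrable b volume (u + Δ) (u + 2 * Δ)) :
    (∫ x in u..(u + Δ), b x) ≤ ∫ x in (u + Δ)..(u + 2 * Δ), b x := by
  have key : (∫ x in u..(u + Δ), b (x + Δ)) = ∫ x in (u + Δ)..(u + 2 * Δ), b x := by
    rw [intervalIntegral.integral_comp_add_right]
    congr 1
    ring
  have hint2' : IntervalIntegrable (fun x => b (x + Δ)) volume u (u + Δ) := by
    have h := hint2.comp_add_right Δ
    have e2 : u + 2 * Δ - Δ = u + Δ := by ring
    rw [add_sub_cancel_right, e2] at h
    exact h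
  rw [← key]
  apply intervalIntegral.integral_mono_ae_restrict (by linarith) hint1 hint2'
  have hres : volume.restrict (Set.Icc u (u + Δ)) = volume.restrict (Set.Ioo u (u + Δ)) :=
    (Measure.restrict_congr_set Ioo_ae_eq_Icc).symm
  rw [Filter.EventuallyLE, hres]
  rw [ae_restrict_iff' measurableSet_Ioo]
  apply Filter.Eventually.of_forall
  intro x hx
  exact hmono ⟨by linarith [hx.1], by linarith [hx.2]⟩
    ⟨by linarith [hx.1], by linarith [hx.2]⟩ (by linarith)

private lemma step_ge_step {b : ℝ → ℝ} {u Δ tk tk1 : ℝ} (hΔ : 0 < Δ)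
    (h1 : tk ≤ u) (h2 : u + 2 * Δ ≤ tk1)
    (hanti : AntitoneOn b (Set.Ioo tk tk1))
    (hint1 : IntervalIntegrable b volume u (u + Δ))
    (hint2 : IntervalIntegrable b volume (u + Δ) (u + 2 * Δ)) :
    (∫ x in (u + Δ)..(u + 2 * Δ), b x) ≤ ∫ x in u..(u + Δ), b x := by
  have key : (∫ x in u..(u + Δ), b (x + Δ)) = ∫ x in (u + Δ)..(u + 2 * Δ), b x := by
    rw [intervalIntegral.integral_comp_add_right]
    congr 1
    ring
  have hint2' : IntervalIntegrable (fun x => b (x + Δ)) volume u (u + Δ) := by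
    have h := hint2.comp_add_right Δ
    have e2 : u + 2 * Δ - Δ = u + Δ := by ring
    rw [add_sub_cancel_right, e2] at h
    exact h
  rw [← key]
  apply intervalIntegral.integral_mono_ae_restrict (by linarith) hint2' hint1
  have hres : volume.restrict (Set.Icc u (u + Δ)) = volume.restrict (Set.Ioo u (u + Δ)) :=
    (Measure.restrict_congr_set Ioo_ae_eq_Icc).symm
  rw [Filter.EventuallyLE, hres]
  rw [ae_restrict_iff' measurableSet_Ioo]
  apply Filter.Eventually.of_forall
  intro x hx
  exact hanti ⟨by linarith [hx.1], by linarith [hx.2]⟩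
    ⟨by linarith [hx.1], by linarith [hx.2]⟩ (by linarith)

private lemma block_bound {b : ℝ → ℝ} {Δ A A' : ℝ} {M : ℕ} {t : ℕ → ℝ}
    (hΔ : 0 < Δ)
    (ht0 : t 0 = A) (htM : t M = A')
    (hpiece : ∀ k < M, MonotoneOn b (Set.Ioo (t k) (t (k + 1))) ∨
      AntitoneOn b (Set.Ioo (t k) (t (k + 1))))
    {Cb : ℝ} (hbd : ∀ x ∈ Set.Icc A A', |b x| ≤ Cb)
    (hbint : IntegrableOn b (Set.Icc A A') volume)
    {u0 : ℝ} {n : ℕ} (hn : 1 ≤ n) (hA : A ≤ u0) (hA' : u0 + n * Δ ≤ A') :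
    |∑ k ∈ Finset.range n, (-1 : ℝ) ^ k * ∫ x in (u0 + k * Δ)..(u0 + (k + 1) * Δ), b x| ≤
      (2 * M + 1) * (2 * (Δ * Cb)) := by
  set c : ℕ → ℝ := fun k => ∫ x in (u0 + k * Δ)..(u0 + (k + 1) * Δ), b x with hc
  have hn' : (1 : ℝ) ≤ n := by exact_mod_cast hn
  have hCb : 0 ≤ Cb := le_trans (abs_nonneg _) (hbd u0 ⟨hA, by nlinarith⟩)
  have hAstep : ∀ r : ℝ, 0 ≤ r → A ≤ u0 + r * Δ := by
    intro r hr
    nlinarith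
  have hA'step : ∀ r : ℝ, r ≤ n → u0 + r * Δ ≤ A' := by
    intro r hr
    nlinarith
  have hint : ∀ j : ℕ, j + 1 ≤ n →
      IntervalIntegrable b volume (u0 + j * Δ) (u0 + j * Δ + Δ) := by
    intro j hj
    apply IntegrableOn.intervalIntegrable
    rw [Set.uIcc_of_le (by nlinarith)]
    apply hbint.mono_set
    apply Set.Icc_subset_Icc
    · exact hAstep j (Nat.cast_nonneg j)
    · have e : u0 + (j : ℝ) * Δ + Δ = u0 + ((j : ℝ) + 1) * Δ := by ring
      rw [e]
      apply hA'step
      exact_mod_cast hj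
  have hck : ∀ j < n, |c j| ≤ Δ * Cb := by
    intro j hj
    have hle : u0 + (j : ℝ) * Δ ≤ u0 + ((j : ℝ) + 1) * Δ := by nlinarith
    have h := intervalIntegral.norm_integral_le_of_norm_le_const
      (C := Cb) (f := b) (a := u0 + (j : ℝ) * Δ) (b := u0 + ((j : ℝ) + 1) * Δ) ?_
    · rw [Real.norm_eq_abs] at h
      have e : u0 + ((j : ℝ) + 1) * Δ - (u0 + (j : ℝ) * Δ) = Δ := by ring
      rw [e, abs_of_pos hΔ] at h
      simp only [hc]
      linarith
    · intro x hx
      rw [Set.uIoc_of_le hle] at hx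
      rw [Real.norm_eq_abs]
      refine hbd x ⟨le_trans (hAstep j (Nat.cast_nonneg j)) hx.1.le, le_trans hx.2 ?_⟩
      apply hA'step
      exact_mod_cast hj
  set F : ℕ → ℕ := fun k => min n (Int.toNat ⌊(t k - u0) / Δ⌋) with hF
  set G : ℕ → ℕ := fun k => min n (Int.toNat ⌈(t k - u0) / Δ⌉) with hG
  set q : ℕ → ℕ := fun r => if r % 2 = 0 then F (r / 2) else G (r / 2) with hq
  set p : ℕ → ℕ := fun l => (Finset.range (l + 1)).sup q with hp
  have hq2k : ∀ k, q (2 * k) = F k := by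
    intro k
    simp only [hq]
    rw [if_pos (by omega)]
    congr 1
    omega
  have hq2k1 : ∀ k, q (2 * k + 1) = G k := by
    intro k
    simp only [hq]
    rw [if_neg (by omega)]
    congr 1
    omega
  have hqle : ∀ r, q r ≤ n := by
    intro r
    simp only [hq]
    split
    · simp only [hF]; exact min_le_left _ _
    · simp only [hG]; exact min_le_left _ _
  have hple : ∀ l, p l ≤ n := fun l => Finset.sup_le fun r _ => hqle r
  have hpmono : ∀ l, p l ≤ p (l + 1) := fun l =>
    Finset.sup_mono (Finset.range_subset_range.2 (by omega))
  have hpsucc : ∀ l, p (l + 1) = q (l + 1) ⊔ p l := by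
    intro l
    simp only [hp, Finset.range_add_one, Finset.sup_insert]
  have hqlep : ∀ l, q l ≤ p l := fun l => Finset.le_sup (Finset.self_mem_range_succ l)
  have hFG : ∀ k, G k ≤ F k + 1 := by
    intro k
    simp only [hF, hG]
    have h := Int.ceil_le_floor_add_one ((t k - u0) / Δ)
    omega
  have hp0 : p 0 = 0 := by
    have h0 : q 0 = F 0 := by simpa using hq2k 0
    have hp0' : p 0 = q 0 := by
      simp only [hp]
      rw [show (0 : ℕ) + 1 = 1 from rfl, Finset.range_one, Finset.sup_singleton]
    rw [hp0', h0]
    simp only [hF]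
    have hx : (t 0 - u0) / Δ ≤ 0 :=
      div_nonpos_of_nonpos_of_nonneg (by rw [ht0]; linarith) hΔ.le
    have hfl : ⌊(t 0 - u0) / Δ⌋ ≤ 0 := by
      have := Int.floor_le_floor hx
      simpa using this
    omega
  have hpN : p (2 * M + 1) = n := by
    have hGM : G M = n := by
      simp only [hG]
      have h1 : (n : ℝ) ≤ (t M - u0) / Δ := by
        rw [le_div_iff₀ hΔ, htM]; linarith
      have h2 : (n : ℤ) ≤ ⌈(t M - u0) / Δ⌉ := by
        have h3 : ((n : ℤ) : ℝ) ≤ (⌈(t M - u0) / Δ⌉ : ℝ) :=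
          le_trans (by exact_mod_cast h1) (Int.le_ceil _)
        exact_mod_cast h3
      omega
    have hq' : q (2 * M + 1) = n := by rw [hq2k1 M, hGM]
    have h1 := hpsucc (2 * M)
    have h2 := hple (2 * M)
    rw [hq'] at h1
    rw [h1]
    omega
  have hrun : ∀ l < 2 * M + 1,
      (∀ j, p l ≤ j → j + 1 < p (l + 1) → c j ≤ c (j + 1)) ∨
      (∀ j, p l ≤ j → j + 1 < p (l + 1) → c (j + 1) ≤ c j) := by
    intro l hl
    rcases Nat.even_or_odd l with he | ho
    · left
      intro j hj1 hj2
      exfalso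
      obtain ⟨k, hk⟩ := he
      have hl2 : l = 2 * k := by omega
      have h1 := hpsucc l
      have h2 : q (l + 1) = G k := by rw [show l + 1 = 2 * k + 1 by omega, hq2k1]
      have h3 : q l = F k := by rw [hl2, hq2k]
      have h4 : F k ≤ p l := h3 ▸ hqlep l
      have h5 : G k ≤ F k + 1 := hFG k
      rw [h2] at h1
      omega
    · obtain ⟨k, hk⟩ := ho
      have hkM : k < M := by omega
      have hql : q l = G k := by rw [hk, hq2k1]
      have hql1 : q (l + 1) = F (k + 1) := by rw [show l + 1 = 2 * (k + 1) by omega, hq2k]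
      have hfacts : ∀ j : ℕ, p l ≤ j → j + 1 < p (l + 1) →
          j + 2 ≤ n ∧ t k ≤ u0 + (j : ℝ) * Δ ∧ u0 + (j : ℝ) * Δ + 2 * Δ ≤ t (k + 1) := by
        intro j hj1 hj2
        have h1 := hpsucc l
        rw [hql1] at h1
        have hjF : j + 2 ≤ F (k + 1) := by omega
        have hjG : G k ≤ j := le_trans (hql ▸ hqlep l) hj1
        simp only [hF] at hjF
        simp only [hG] at hjG
        have hj2n : j + 2 ≤ n := le_trans hjF (min_le_left _ _)
        have hfl : (j : ℤ) + 2 ≤ ⌊(t (k + 1) - u0) / Δ⌋ := by omega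
        have hcl : ⌈(t k - u0) / Δ⌉ ≤ (j : ℤ) := by omega
        refine ⟨hj2n, ?_, ?_⟩
        · have h5 : (t k - u0) / Δ ≤ (j : ℝ) := by
            calc (t k - u0) / Δ ≤ (⌈(t k - u0) / Δ⌉ : ℝ) := Int.le_ceil _
              _ ≤ (j : ℝ) := by exact_mod_cast hcl
          rw [div_le_iff₀ hΔ] at h5
          linarith
        · have h5 : ((j : ℝ) + 2) ≤ (t (k + 1) - u0) / Δ := by
            calc ((j : ℝ) + 2) = (((j : ℤ) + 2 : ℤ) : ℝ) := by push_cast; ring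
              _ ≤ (⌊(t (k + 1) - u0) / Δ⌋ : ℝ) := by exact_mod_cast hfl
              _ ≤ _ := Int.floor_le _
          rw [le_div_iff₀ hΔ] at h5
          linarith
      have hints : ∀ j : ℕ, j + 2 ≤ n →
          IntervalIntegrable b volume (u0 + (j : ℝ) * Δ) (u0 + (j : ℝ) * Δ + Δ) ∧
          IntervalIntegrable b volume (u0 + (j : ℝ) * Δ + Δ) (u0 + (j : ℝ) * Δ + 2 * Δ) := by
        intro j hj
        refine ⟨hint j (by omega), ?_⟩
        have h := hint (j + 1) (by omega)
        have e1 : u0 + ((j + 1 : ℕ) : ℝ) * Δ = u0 + (j : ℝ) * Δ + Δ := by push_cast; ring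
        rw [e1] at h
        have e2 : u0 + (j : ℝ) * Δ + Δ + Δ = u0 + (j : ℝ) * Δ + 2 * Δ := by ring
        rw [e2] at h
        exact h
      have hgoal : ∀ j : ℕ, j + 2 ≤ n →
          (c j = ∫ x in (u0 + (j : ℝ) * Δ)..(u0 + (j : ℝ) * Δ + Δ), b x) ∧
          (c (j + 1) = ∫ x in (u0 + (j : ℝ) * Δ + Δ)..(u0 + (j : ℝ) * Δ + 2 * Δ), b x) := by
        intro j _
        constructor
        · simp only [hc]
          congr 1
          ring
        · simp only [hc]
          have e1 : u0 + ((j + 1 : ℕ) : ℝ) * Δ = u0 + (j : ℝ) * Δ + Δ := by push_cast; ring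
          have e2 : u0 + (((j + 1 : ℕ) : ℝ) + 1) * Δ = u0 + (j : ℝ) * Δ + 2 * Δ := by
            push_cast; ring
          rw [e1, e2]
      rcases hpiece k hkM with hm | hm
      · left
        intro j hj1 hj2
        obtain ⟨hj2n, hl1, hl2⟩ := hfacts j hj1 hj2
        obtain ⟨hi1, hi2⟩ := hints j hj2n
        obtain ⟨he1, he2⟩ := hgoal j hj2n
        rw [he1, he2]
        exact step_le_step hΔ hl1 hl2 hm hi1 hi2
      · right
        intro j hj1 hj2
        obtain ⟨hj2n, hl1, hl2⟩ := hfacts j hj1 hj2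
        obtain ⟨hi1, hi2⟩ := hints j hj2n
        obtain ⟨he1, he2⟩ := hgoal j hj2n
        rw [he1, he2]
        exact step_ge_step hΔ hl1 hl2 hm hi1 hi2
  have happ := alt_partition c (Δ * Cb) (mul_nonneg hΔ.le hCb) (2 * M + 1) p
    (fun l _ => hpmono l) (by rw [hpN]; exact hck) hrun
  rw [hp0, hpN] at happ
  rw [Finset.range_eq_Ico]
  push_cast at happ
  convert happ using 2

private lemma piecewise_integrable {b : ℝ → ℝ} {A A' : ℝ} {M : ℕ} {t : ℕ → ℝ}
    (ht0 : t 0 = A) (htM : t M = A') (htmono : ∀ k < M, t k ≤ t (k + 1))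
    (hpiece : ∀ k < M, MonotoneOn b (Set.Ioo (t k) (t (k + 1))) ∨
      AntitoneOn b (Set.Ioo (t k) (t (k + 1))))
    {Cb : ℝ} (hbd : ∀ x ∈ Set.Icc A A', |b x| ≤ Cb) :
    IntegrableOn b (Set.Icc A A') volume := by
  classical
  have htc : ∀ j k, j ≤ k → k ≤ M → t j ≤ t k := chain_mono htmono
  have hpieceInt : ∀ k < M, IntegrableOn b (Set.Ioo (t k) (t (k + 1))) volume := by
    intro k hk
    have hsubIcc : Set.Ioo (t k) (t (k + 1)) ⊆ Set.Icc A A' := by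
      intro x hx
      exact ⟨le_trans (ht0 ▸ htc 0 k (Nat.zero_le k) hk.le) hx.1.le,
        le_trans hx.2.le (htM ▸ htc (k + 1) M hk le_rfl)⟩
    have hae : AEMeasurable b (volume.restrict (Set.Ioo (t k) (t (k + 1)))) := by
      rcases hpiece k hk with h | h
      · exact aemeasurable_restrict_of_monotoneOn measurableSet_Ioo h
      · exact aemeasurable_restrict_of_antitoneOn measurableSet_Ioo h
    apply Integrable.mono' (g := fun _ => Cb)
      (integrableOn_const (C := Cb) measure_Ioo_lt_top.ne) hae.aestronglyMeasurable
    exact (ae_restrict_iff' measurableSet_Ioo).2 (Filter.Eventually.of_forall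
      fun x hx => by rw [Real.norm_eq_abs]; exact hbd x (hsubIcc hx))
  have hUint : IntegrableOn b (⋃ k ∈ Finset.range M, Set.Ioo (t k) (t (k + 1))) volume :=
    integrableOn_finset_iUnion.2 fun k hk => hpieceInt k (Finset.mem_range.1 hk)
  apply hUint.mono_set_ae
  rw [ae_le_set]
  have hT : volume (Set.range t) = 0 := (Set.countable_range t).measure_zero _
  refine measure_mono_null ?_ hT
  · intro x hx
    simp only [Set.mem_diff, Set.mem_Icc, Set.mem_iUnion, Finset.mem_range, exists_prop,
      not_exists, not_and, Set.mem_Ioo, Set.mem_range] at hx ⊢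
    obtain ⟨⟨hx1, hx2⟩, hx3⟩ := hx
    by_contra hne
    push_neg at hne
    have hne' : ∀ k, x ≠ t k := fun k h => hne k h.symm
    have hP0 : t 0 < x := lt_of_le_of_ne (ht0 ▸ hx1) (fun h => hne' 0 h.symm)
    set P : ℕ → Prop := fun k => t k < x with hP
    have hPk : P (Nat.findGreatest P M) := Nat.findGreatest_spec (Nat.zero_le M) hP0
    have hkM : Nat.findGreatest P M ≤ M := Nat.findGreatest_le M
    have hklt : Nat.findGreatest P M < M := by
      rcases Nat.lt_or_ge (Nat.findGreatest P M) M with h | h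
      · exact h
      · exfalso
        have he : Nat.findGreatest P M = M := le_antisymm hkM h
        rw [he] at hPk
        have hle : x ≤ t M := htM ▸ hx2
        exact absurd hPk (not_lt.2 hle)
    have hnext : ¬ P (Nat.findGreatest P M + 1) :=
      Nat.findGreatest_is_greatest (Nat.lt_succ_self _) (by omega)
    have hxlt : x < t (Nat.findGreatest P M + 1) :=
      lt_of_le_of_ne (not_lt.1 hnext) (hne' _)
    have hcontra := hx3 (Nat.findGreatest P M) hklt
    simp only [Set.mem_Ioo, not_and, not_lt] at hcontra
    have := hcontra hPk
    linarith

private lemma block_value {b g : ℝ → ℝ} {Δ : ℝ} (hΔ : 0 < Δ)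
    {u0 : ℝ} {n : ℕ} {sg : ℝ}
    (hbint : IntegrableOn b (Set.Ico u0 (u0 + n * Δ)) volume)
    (hgeq : ∀ x ∈ Set.Ico u0 (u0 + n * Δ), g x = sg * (-1 : ℝ) ^ ⌊(x - u0) / Δ⌋) :
    IntegrableOn (fun x => b x * g x) (Set.Ico u0 (u0 + n * Δ)) volume ∧
    ∫ x in Set.Ico u0 (u0 + n * Δ), b x * g x =
      sg * ∑ k ∈ Finset.range n, (-1 : ℝ) ^ k *
        ∫ x in (u0 + k * Δ)..(u0 + (k + 1) * Δ), b x := by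
  have hstep_sub : ∀ k : ℕ, k < n →
      Set.Ico (u0 + (k : ℝ) * Δ) (u0 + ((k : ℝ) + 1) * Δ) ⊆ Set.Ico u0 (u0 + n * Δ) := by
    intro k hk x hx
    have h1 : (0 : ℝ) ≤ (k : ℝ) := Nat.cast_nonneg k
    have h2 : (k : ℝ) + 1 ≤ n := by exact_mod_cast hk
    exact ⟨by nlinarith [hx.1], by nlinarith [hx.2]⟩
  have hcover : Set.Ico u0 (u0 + n * Δ) =
      ⋃ k ∈ Finset.range n, Set.Ico (u0 + (k : ℝ) * Δ) (u0 + ((k : ℝ) + 1) * Δ) := by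
    ext x
    simp only [Set.mem_iUnion, Finset.mem_range, exists_prop]
    constructor
    · intro hx
      set y := (x - u0) / Δ with hy
      have hy0 : 0 ≤ y := div_nonneg (by linarith [hx.1]) hΔ.le
      have hfl0 : 0 ≤ ⌊y⌋ := Int.floor_nonneg.2 hy0
      have hyn : y < n := by rw [hy, div_lt_iff₀ hΔ]; linarith [hx.2]
      have hfln : ⌊y⌋ < (n : ℤ) := Int.floor_lt.2 (by exact_mod_cast hyn)
      have hcast : ((Int.toNat ⌊y⌋ : ℕ) : ℝ) = ((⌊y⌋ : ℤ) : ℝ) := by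
        exact_mod_cast Int.toNat_of_nonneg hfl0
      have hyΔ : y * Δ = x - u0 := div_mul_cancel₀ _ hΔ.ne'
      refine ⟨Int.toNat ⌊y⌋, by omega, ?_, ?_⟩
      · have h1 : ((Int.toNat ⌊y⌋ : ℕ) : ℝ) ≤ y := by
          rw [hcast]; exact Int.floor_le y
        nlinarith
      · have h1 : y < ((Int.toNat ⌊y⌋ : ℕ) : ℝ) + 1 := by
          rw [hcast]; exact Int.lt_floor_add_one y
        nlinarith
    · rintro ⟨k, hk, hx⟩
      exact hstep_sub k hk hx
  have hgconst : ∀ k : ℕ, k < n →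
      ∀ x ∈ Set.Ico (u0 + (k : ℝ) * Δ) (u0 + ((k : ℝ) + 1) * Δ),
      b x * g x = (sg * (-1 : ℝ) ^ k) * b x := by
    intro k hk x hx
    have hfl : ⌊(x - u0) / Δ⌋ = (k : ℤ) := by
      rw [Int.floor_eq_iff]
      constructor
      · push_cast
        rw [le_div_iff₀ hΔ]
        linarith [hx.1]
      · push_cast
        rw [div_lt_iff₀ hΔ]
        linarith [hx.2]
    rw [hgeq x (hstep_sub k hk hx), hfl, zpow_natCast]
    ring
  have hIstep : ∀ k : ℕ, k < n → IntegrableOn (fun x => b x * g x)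
      (Set.Ico (u0 + (k : ℝ) * Δ) (u0 + ((k : ℝ) + 1) * Δ)) volume := by
    intro k hk
    have h1 : IntegrableOn (fun x => (sg * (-1 : ℝ) ^ k) * b x)
        (Set.Ico (u0 + (k : ℝ) * Δ) (u0 + ((k : ℝ) + 1) * Δ)) volume :=
      (hbint.mono_set (hstep_sub k hk)).const_mul _
    exact h1.congr_fun (fun x hx => (hgconst k hk x hx).symm) measurableSet_Ico
  have hIfull : IntegrableOn (fun x => b x * g x) (Set.Ico u0 (u0 + n * Δ)) volume := by
    rw [hcover]
    exact integrableOn_finset_iUnion.2 fun k hk => hIstep k (Finset.mem_range.1 hk)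
  refine ⟨hIfull, ?_⟩
  have hdisjsteps : Set.Pairwise ↑(Finset.range n) (Function.onFun Disjoint
      fun k : ℕ => Set.Ico (u0 + (k : ℝ) * Δ) (u0 + ((k : ℝ) + 1) * Δ)) := by
    have key : ∀ k1 k2 : ℕ, k1 < k2 → Disjoint
        (Set.Ico (u0 + (k1 : ℝ) * Δ) (u0 + ((k1 : ℝ) + 1) * Δ))
        (Set.Ico (u0 + (k2 : ℝ) * Δ) (u0 + ((k2 : ℝ) + 1) * Δ)) := by
      intro k1 k2 h
      rw [Set.Ico_disjoint_Ico]
      have h1 : (k1 : ℝ) + 1 ≤ k2 := by exact_mod_cast h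
      refine le_trans (min_le_left _ _) (le_trans ?_ (le_max_right _ _))
      nlinarith
    intro k hk k' hk' hkk'
    rcases lt_or_gt_of_ne hkk' with h | h
    · exact key k k' h
    · exact (key k' k h).symm
  calc ∫ x in Set.Ico u0 (u0 + n * Δ), b x * g x
      = ∑ k ∈ Finset.range n, ∫ x in Set.Ico (u0 + (k : ℝ) * Δ) (u0 + ((k : ℝ) + 1) * Δ),
          b x * g x := by
        rw [hcover]
        exact integral_biUnion_finset _ (fun k _ => measurableSet_Ico) hdisjsteps
          (fun k hk => hIstep k (Finset.mem_range.1 hk))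
    _ = ∑ k ∈ Finset.range n, sg * ((-1 : ℝ) ^ k *
          ∫ x in (u0 + (k : ℝ) * Δ)..(u0 + ((k : ℝ) + 1) * Δ), b x) := by
        apply Finset.sum_congr rfl
        intro k hk
        have hle : u0 + (k : ℝ) * Δ ≤ u0 + ((k : ℝ) + 1) * Δ := by nlinarith
        rw [setIntegral_congr_fun measurableSet_Ico (hgconst k (Finset.mem_range.1 hk)),
          MeasureTheory.integral_const_mul, setIntegral_congr_set Ico_ae_eq_Ioc,
          ← intervalIntegral.integral_of_le hle]
        ring
    _ = sg * ∑ k ∈ Finset.range n, (-1 : ℝ) ^ k *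
          ∫ x in (u0 + (k : ℝ) * Δ)..(u0 + ((k : ℝ) + 1) * Δ), b x := by
        rw [Finset.mul_sum]

/-- `g` is a `B`-block alternating step function with step size `Δ`, supported on `I`:
it is supported on `B` pairwise disjoint subintervals of `I`, on each of which it is a
step function with step size `Δ` alternating between the values `-1` and `+1`. -/
def IsBlockAlternating (g : ℝ → ℝ) (B : ℕ) (Δ : ℝ) (I : Set ℝ) : Prop :=
  ∃ (a : Fin B → ℝ) (m : Fin B → ℕ) (s : Fin B → ℤ),
    (∀ i, Set.Ico (a i) (a i + m i * Δ) ⊆ I) ∧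
    (∀ i, 1 ≤ m i) ∧
    (∀ i, s i = 1 ∨ s i = -1) ∧
    (Pairwise fun i i' =>
      Disjoint (Set.Ico (a i) (a i + m i * Δ)) (Set.Ico (a i') (a i' + m i' * Δ))) ∧
    (∀ i, ∀ x ∈ Set.Ico (a i) (a i + m i * Δ),
      g x = (s i : ℝ) * (-1 : ℝ) ^ ⌊(x - a i) / Δ⌋) ∧
    (∀ x, x ∉ ⋃ i, Set.Ico (a i) (a i + m i * Δ) → g x = 0)

/-- `b` is `M`-piecewise monotone on `[A, A']`: there is a partition
`A = t_0 ≤ t_1 ≤ ⋯ ≤ t_M = A'` such that `b` is monotone and of one sign on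
each open subinterval. -/
def PiecewiseMonotoneOn (b : ℝ → ℝ) (M : ℕ) (A A' : ℝ) : Prop :=
  ∃ t : ℕ → ℝ, t 0 = A ∧ t M = A' ∧ (∀ k < M, t k ≤ t (k + 1)) ∧
    ∀ k < M,
      (MonotoneOn b (Set.Ioo (t k) (t (k + 1))) ∨
        AntitoneOn b (Set.Ioo (t k) (t (k + 1)))) ∧
      ((∀ x ∈ Set.Ioo (t k) (t (k + 1)), 0 ≤ b x) ∨
        (∀ x ∈ Set.Ioo (t k) (t (k + 1)), b x ≤ 0))

/-- Alternating series test for block alternating functions: if `g` is a `B`-block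
alternating step function with step size `Δ` supported on `[A, A')` and `b` is bounded
and `M`-piecewise monotone there, then `|∫ b g| ≤ C M B Δ ‖b‖_∞`. -/
theorem stmt9 :
    ∃ C : ℝ, 0 < C ∧
      ∀ (Δ : ℝ) (_ : 0 < Δ) (B M : ℕ) (_ : 1 ≤ B) (_ : 1 ≤ M)
        (A A' : ℝ) (_ : A ≤ A') (g b : ℝ → ℝ) (Cb : ℝ),
        IsBlockAlternating g B Δ (Set.Ico A A') →
        PiecewiseMonotoneOn b M A A' →
        (∀ x ∈ Set.Icc A A', |b x| ≤ Cb) →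
        |∫ x in A..A', b x * g x| ≤ C * M * B * Δ * Cb := by
  refine ⟨6, by norm_num, ?_⟩
  intro Δ hΔ B M hB hM A A' hAA' g b Cb hg hbpm hbd
  obtain ⟨a, m, s, hsub, hm1, hs, hdisj, hgeq, hg0⟩ := hg
  obtain ⟨t, ht0, htM, htmono, hpieceall⟩ := hbpm
  have hpiece : ∀ k < M, MonotoneOn b (Set.Ioo (t k) (t (k + 1))) ∨
      AntitoneOn b (Set.Ioo (t k) (t (k + 1))) := fun k hk => (hpieceall k hk).1
  have hCb : 0 ≤ Cb := le_trans (abs_nonneg _) (hbd A ⟨le_rfl, hAA'⟩)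
  have hbint : IntegrableOn b (Set.Icc A A') volume :=
    piecewise_integrable ht0 htM htmono hpiece hbd
  have hblk : ∀ i, A ≤ a i ∧ a i + m i * Δ ≤ A' := by
    intro i
    have h1 : (1 : ℝ) ≤ m i := by exact_mod_cast hm1 i
    have hlt : a i < a i + m i * Δ := by nlinarith
    exact (Set.Ico_subset_Ico_iff hlt).1 (hsub i)
  have hblksub : ∀ i, Set.Ico (a i) (a i + m i * Δ) ⊆ Set.Icc A A' := fun i =>
    (hsub i).trans Set.Ico_subset_Icc_self
  have hbv : ∀ i : Fin B,
      IntegrableOn (fun x => b x * g x) (Set.Ico (a i) (a i + m i * Δ)) volume ∧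
      ∫ x in Set.Ico (a i) (a i + m i * Δ), b x * g x =
        (s i : ℝ) * ∑ k ∈ Finset.range (m i), (-1 : ℝ) ^ k *
          ∫ x in (a i + k * Δ)..(a i + (k + 1) * Δ), b x := fun i =>
    block_value hΔ (hbint.mono_set (hblksub i)) (hgeq i)
  have hUmeas : MeasurableSet (⋃ i, Set.Ico (a i) (a i + m i * Δ)) :=
    MeasurableSet.iUnion fun i => measurableSet_Ico
  have hU : (⋃ i, Set.Ico (a i) (a i + m i * Δ)) ⊆ Set.Icc A A' :=
    Set.iUnion_subset hblksub
  have hIU : IntegrableOn (fun x => b x * g x)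
      (⋃ i, Set.Ico (a i) (a i + m i * Δ)) volume := by
    have e : (⋃ i, Set.Ico (a i) (a i + m i * Δ))
        = ⋃ i ∈ Finset.univ, Set.Ico (a i) (a i + m i * Δ) := by simp
    rw [e]
    exact integrableOn_finset_iUnion.2 fun i _ => (hbv i).1
  have hIdiff : IntegrableOn (fun x => b x * g x)
      (Set.Icc A A' \ ⋃ i, Set.Ico (a i) (a i + m i * Δ)) volume := by
    apply IntegrableOn.congr_fun integrableOn_zero ?_ (measurableSet_Icc.diff hUmeas)
    intro x hx
    exact ((by rw [hg0 x hx.2, mul_zero] : b x * g x = 0)).symm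
  have hsplit : (∫ x in A..A', b x * g x) =
      ∑ i : Fin B, ∫ x in Set.Ico (a i) (a i + m i * Δ), b x * g x := by
    rw [intervalIntegral.integral_of_le hAA', setIntegral_congr_set Ioc_ae_eq_Icc,
      ← Set.union_diff_cancel hU,
      setIntegral_union disjoint_sdiff_self_right (measurableSet_Icc.diff hUmeas) hIU hIdiff]
    have hz : ∫ x in Set.Icc A A' \ ⋃ i, Set.Ico (a i) (a i + m i * Δ), b x * g x = 0 := by
      rw [setIntegral_congr_fun (measurableSet_Icc.diff hUmeas)
        (g := fun _ => (0 : ℝ)) (fun x hx => by rw [hg0 x hx.2, mul_zero])]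
      simp
    rw [hz, add_zero]
    have e : (⋃ i, Set.Ico (a i) (a i + m i * Δ))
        = ⋃ i ∈ Finset.univ, Set.Ico (a i) (a i + m i * Δ) := by simp
    rw [e, integral_biUnion_finset Finset.univ (fun i _ => measurableSet_Ico)
      (fun i _ i' _ hne => hdisj hne) (fun i _ => (hbv i).1)]
  rw [hsplit]
  have hbound : ∀ i : Fin B, |∫ x in Set.Ico (a i) (a i + m i * Δ), b x * g x| ≤
      (2 * (M : ℝ) + 1) * (2 * (Δ * Cb)) := by
    intro i
    rw [(hbv i).2, abs_mul]
    have hsi : |(s i : ℝ)| = 1 := by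
      rcases hs i with h | h <;> rw [h] <;> norm_num
    rw [hsi, one_mul]
    exact block_bound hΔ ht0 htM hpiece hbd hbint (hm1 i) (hblk i).1 (hblk i).2
  have hM' : (1 : ℝ) ≤ M := by exact_mod_cast hM
  have hB' : (1 : ℝ) ≤ B := by exact_mod_cast hB
  calc |∑ i : Fin B, ∫ x in Set.Ico (a i) (a i + m i * Δ), b x * g x|
      ≤ ∑ i : Fin B, |∫ x in Set.Ico (a i) (a i + m i * Δ), b x * g x| :=
        Finset.abs_sum_le_sum_abs _ _
    _ ≤ ∑ _i : Fin B, (2 * (M : ℝ) + 1) * (2 * (Δ * Cb)) :=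
        Finset.sum_le_sum fun i _ => hbound i
    _ = B * ((2 * (M : ℝ) + 1) * (2 * (Δ * Cb))) := by
        rw [Finset.sum_const, Finset.card_univ, Fintype.card_fin, nsmul_eq_mul]
    _ ≤ 6 * M * B * Δ * Cb := by
        nlinarith [mul_nonneg hΔ.le hCb,
          mul_nonneg (mul_nonneg (sub_nonneg.2 hM') (by linarith : (0:ℝ) ≤ (B:ℝ)))
            (mul_nonneg hΔ.le hCb)]
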